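/- Let (e_α : α < ω₁) be a coherent sequence of injections e_α : α → ℕ (meaning each e_α is injective and any two e_{α₁}, e_{α₂} differ at only finitely many common arguments). Then for every uncountable A ⊆ ω₁ and every γ < ω₁ there is an uncountable A' ⊆ A \ (γ+1) such that e_{α₁} and e_{α₂} agree on all ordinals ≤ γ for every α₁, α₂ ∈ A'. -/

import Mathlib

open Cardinal Set

/-- The set of functions from a countable type to ℕ differing from a fixed
function at only finitely many points is countable. -/
lemma countable_finite_diff {I : Type*} [Countable I] (g₀ : I → ℕ) :
    {f : I → ℕ | {i | f i ≠ g₀ i}.Finite}.Countable := by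
  have hsub : {f : I → ℕ | {i | f i ≠ g₀ i}.Finite} ⊆
      ⋃ t : Finset I, {f | ∀ i, f i ≠ g₀ i → i ∈ t} := by
    intro f hf
    exact mem_iUnion.2 ⟨hf.toFinset, fun i hi => hf.mem_toFinset.2 hi⟩
  refine Set.Countable.mono hsub (Set.countable_iUnion fun t => ?_)
  have : ∀ f ∈ {f : I → ℕ | ∀ i, f i ≠ g₀ i → i ∈ t}, ∀ f' ∈ {f : I → ℕ | ∀ i, f i ≠ g₀ i → i ∈ t},
      (fun i : t => f i) = (fun i : t => f' i) → f = f' := by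
    intro f hf f' hf' heq
    funext i
    by_cases hi : i ∈ t
    · exact congrFun heq ⟨i, hi⟩
    · have h1 : f i = g₀ i := by by_contra h; exact hi (hf i h)
      have h2 : f' i = g₀ i := by by_contra h; exact hi (hf' i h)
      rw [h1, h2]
  exact Set.countable_of_injective_of_countable_image this (Set.to_countable _)

/-- given a coherent sequence of injections `e_α : α → ℕ` (`α < ω₁`),
every uncountable `A ⊆ ω₁` and `γ < ω₁` admit an uncountable `A' ⊆ A` of ordinals
above `γ` on which all `e_α` agree on arguments `≤ γ`. -/
theorem stmt5 (e : (α : Ordinal.{0}) → {β : Ordinal.{0} // β < α} → ℕ)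
    (hinj : ∀ α, α < (Cardinal.aleph 1).ord → Function.Injective (e α))
    (hcoh : ∀ α₁ α₂ : Ordinal.{0}, α₁ < (Cardinal.aleph 1).ord →
      α₂ < (Cardinal.aleph 1).ord →
      {β : Ordinal.{0} | ∃ h₁ : β < α₁, ∃ h₂ : β < α₂,
        e α₁ ⟨β, h₁⟩ ≠ e α₂ ⟨β, h₂⟩}.Finite)
    (A : Set Ordinal.{0}) (hA : A ⊆ Set.Iio (Cardinal.aleph 1).ord)
    (hAunc : ¬ A.Countable) (γ : Ordinal.{0}) (hγ : γ < (Cardinal.aleph 1).ord) :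
    ∃ A' ⊆ A, ¬ A'.Countable ∧ (∀ α ∈ A', γ < α) ∧
      ∀ α₁ ∈ A', ∀ α₂ ∈ A', ∀ β ≤ γ, ∀ h₁ : β < α₁, ∀ h₂ : β < α₂,
        e α₁ ⟨β, h₁⟩ = e α₂ ⟨β, h₂⟩ := by
  have hlim : Order.IsSuccLimit ((Cardinal.aleph 1).ord) := Cardinal.isSuccLimit_ord (aleph0_le_aleph 1)
  have hγ1 : γ + 1 < (Cardinal.aleph 1).ord := hlim.succ_lt hγ
  -- the set of ordinals ≤ γ is countable
  have hIic : (Set.Iic γ).Countable := by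
    have h1 : Set.Iic γ ⊆ Set.Iio (γ + 1) := fun x hx => lt_of_le_of_lt hx (Order.lt_succ γ)
    refine Set.Countable.mono h1 ?_
    rw [Cardinal.countable_iff_lt_aleph_one, Ordinal.mk_Iio_ordinal, Cardinal.lift_lt_aleph_one]
    exact Cardinal.lt_ord.1 hγ1
  set A₀ : Set Ordinal.{0} := {α ∈ A | γ < α} with hA₀def
  have hA₀unc : ¬ A₀.Countable := by
    intro h
    apply hAunc
    have : A ⊆ A₀ ∪ Set.Iic γ := by
      intro α hα
      rcases lt_or_ge γ α with h' | h'
      · exact Or.inl ⟨hα, h'⟩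
      · exact Or.inr h'
    exact Set.Countable.mono this (h.union hIic)
  haveI : Countable (Set.Iic γ) := hIic.to_subtype
  set I := (Set.Iic γ) with hIdef
  set g : Ordinal.{0} → I → ℕ := fun α i =>
    if h : (i : Ordinal) < α then e α ⟨i, h⟩ else 0 with hgdef
  set g₀ : I → ℕ := g (γ + 1) with hg₀def
  -- for each α ∈ A₀, g α differs from g₀ finitely
  have hfin : ∀ α ∈ A₀, {i : I | g α i ≠ g₀ i}.Finite := by
    intro α hα
    have hαlt : α < (Cardinal.aleph 1).ord := hA hα.1
    have hD := hcoh α (γ + 1) hαlt hγ1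
    have hsub : {i : I | g α i ≠ g₀ i} ⊆
        Subtype.val ⁻¹' {β : Ordinal.{0} | ∃ h₁ : β < α, ∃ h₂ : β < γ + 1,
          e α ⟨β, h₁⟩ ≠ e (γ + 1) ⟨β, h₂⟩} := by
      intro i hi
      have h₁ : (i : Ordinal) < α := lt_of_le_of_lt i.2 hα.2
      have h₂ : (i : Ordinal) < γ + 1 := lt_of_le_of_lt i.2 (Order.lt_succ γ)
      refine ⟨h₁, h₂, ?_⟩
      simp only [mem_setOf_eq, hg₀def, hgdef] at hi
      rw [dif_pos h₁, dif_pos h₂] at hi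
      exact hi
    exact Set.Finite.subset (hD.preimage (Subtype.val_injective.injOn)) hsub
  -- countably many possible values of g α
  have hS := countable_finite_diff g₀
  -- pigeonhole: some fiber is uncountable
  have : ∃ f ∈ {f : I → ℕ | {i | f i ≠ g₀ i}.Finite},
      ¬ {α ∈ A₀ | g α = f}.Countable := by
    by_contra h
    push_neg at h
    apply hA₀unc
    have hcover : A₀ ⊆ ⋃ f ∈ {f : I → ℕ | {i | f i ≠ g₀ i}.Finite}, {α ∈ A₀ | g α = f} := by
      intro α hα
      exact Set.mem_biUnion (hfin α hα) ⟨hα, rfl⟩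
    exact Set.Countable.mono hcover (Set.Countable.biUnion hS h)
  obtain ⟨f, _, hfunc⟩ := this
  refine ⟨{α ∈ A₀ | g α = f}, fun α hα => hα.1.1, hfunc, fun α hα => hα.1.2, ?_⟩
  intro α₁ hα₁ α₂ hα₂ β hβ h₁ h₂
  have e1 : e α₁ ⟨β, h₁⟩ = f ⟨β, hβ⟩ := by
    rw [← hα₁.2]; simp [hgdef, dif_pos h₁]
  have e2 : e α₂ ⟨β, h₂⟩ = f ⟨β, hβ⟩ := by
    rw [← hα₂.2]; simp [hgdef, dif_pos h₂]
  rw [e1, e2]
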